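/- For all integers υ ≥ 1 and nonnegative integers b_1, …, b_υ with Σ_{i=1}^υ b_i > υ: γ_{Σ_{i=1}^υ b_i} ≥ Σ_{i=1}^υ γ_{b_i} ≥ υ γ_{⌊Σ_{i=1}^υ b_i / υ⌋}. -/

import Mathlib

open MeasureTheory Finset Filter

/-- `lamBK μ b k` is `λ_{b,k} = ∫_{[0,1]} x^{k-2} (1-x)^{b-k} dΛ(x)`. -/
noncomputable def lamBK (μ : Measure ℝ) (b k : ℕ) : ℝ :=
  ∫ x in Set.Icc (0:ℝ) 1, x ^ (k - 2) * (1 - x) ^ (b - k) ∂μ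

/-- `lamB μ b` is `λ_b = Σ_{k=2}^b C(b,k) λ_{b,k}`. -/
noncomputable def lamB (μ : Measure ℝ) (b : ℕ) : ℝ :=
  ∑ k ∈ Finset.Icc 2 b, (b.choose k : ℝ) * lamBK μ b k

/-- `gamB μ b` is `γ_b = Σ_{k=2}^b C(b,k) (k-1) λ_{b,k}`. -/
noncomputable def gamB (μ : Measure ℝ) (b : ℕ) : ℝ :=
  ∑ k ∈ Finset.Icc 2 b, (b.choose k : ℝ) * ((k : ℝ) - 1) * lamBK μ b k

noncomputable def Gfun (b : ℕ) (x : ℝ) : ℝ :=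
  ∑ k ∈ Finset.Icc 2 b, (b.choose k : ℝ) * ((k : ℝ) - 1) * (x ^ (k - 2) * (1 - x) ^ (b - k))

lemma contG (b : ℕ) : Continuous (Gfun b) := by
  unfold Gfun
  exact continuous_finset_sum _ (fun k _ => by fun_prop)

lemma gamB_eq_integral (μ : Measure ℝ) [IsFiniteMeasure μ] (b : ℕ) :
    gamB μ b = ∫ x in Set.Icc (0:ℝ) 1, Gfun b x ∂μ := by
  have hint : ∀ k ∈ Finset.Icc 2 b, Integrable
      (fun x => (b.choose k : ℝ) * ((k:ℝ)-1) * (x ^ (k-2) * (1-x) ^ (b-k)))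
      (μ.restrict (Set.Icc (0:ℝ) 1)) :=
    fun k _ => Continuous.integrableOn_Icc (by fun_prop)
  unfold gamB Gfun lamBK
  rw [integral_finset_sum _ hint]
  exact Finset.sum_congr rfl fun k _ => (integral_const_mul _ _).symm

lemma sum_k_choose (b : ℕ) (x : ℝ) :
    ∑ k ∈ range (b+1), (k:ℝ) * (b.choose k : ℝ) * (x ^ k * (1-x) ^ (b-k)) = b * x := by
  cases b with
  | zero => simp
  | succ m =>
    rw [Finset.sum_range_succ']
    have h1 : ∀ j ∈ range (m+1),
        ((j+1:ℕ):ℝ) * ((m+1).choose (j+1) : ℝ) * (x ^ (j+1) * (1-x) ^ (m+1-(j+1)))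
        = ((m+1:ℕ):ℝ) * x * ((m.choose j : ℝ) * (x ^ j * (1-x) ^ (m-j))) := by
      intro j _
      have hn : (j+1) * (m+1).choose (j+1) = (m+1) * m.choose j := by
        rw [mul_comm (j+1), ← Nat.add_one_mul_choose_eq]
      have hc : ((j:ℝ)+1) * ((m+1).choose (j+1) : ℝ) = ((m:ℝ)+1) * (m.choose j : ℝ) := by
        exact_mod_cast congrArg (Nat.cast : ℕ → ℝ) hn
      have he : m+1-(j+1) = m - j := by omega
      rw [he]
      push_cast
      linear_combination (x^(j+1) * (1-x)^(m-j)) * hc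
    rw [Finset.sum_congr rfl h1, ← Finset.mul_sum]
    have hbin : ∑ j ∈ range (m+1), (m.choose j : ℝ) * (x ^ j * (1-x) ^ (m-j)) = 1 := by
      have h := add_pow x (1-x) m
      simp only [add_sub_cancel, one_pow] at h
      rw [Finset.sum_congr rfl (fun j (_ : j ∈ range (m+1)) =>
        (by ring : (m.choose j : ℝ) * (x ^ j * (1-x) ^ (m-j))
          = x ^ j * (1-x) ^ (m-j) * (m.choose j : ℝ)))]
      exact h.symm
    rw [hbin]
    push_cast
    ring

lemma sum_choose_one (b : ℕ) (x : ℝ) :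
    ∑ k ∈ range (b+1), (b.choose k : ℝ) * (x ^ k * (1-x) ^ (b-k)) = 1 := by
  have h := add_pow x (1-x) b
  simp only [add_sub_cancel, one_pow] at h
  rw [Finset.sum_congr rfl (fun j (_ : j ∈ range (b+1)) =>
    (by ring : (b.choose j : ℝ) * (x ^ j * (1-x) ^ (b-j))
      = x ^ j * (1-x) ^ (b-j) * (b.choose j : ℝ)))]
  exact h.symm

/-- key polynomial identity: x^2 * Gfun b x = b x - 1 + (1-x)^b. -/
lemma idG (b : ℕ) (x : ℝ) : x^2 * Gfun b x = b * x - 1 + (1-x)^b := by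
  unfold Gfun
  match b with
  | 0 => simp
  | 1 => norm_num [Finset.Icc_eq_empty_of_lt]
  | (m+2) =>
    have step1 : x^2 * ∑ k ∈ Finset.Icc 2 (m+2), ((m+2).choose k : ℝ) * ((k : ℝ) - 1) *
        (x ^ (k - 2) * (1 - x) ^ (m+2 - k))
        = ∑ k ∈ Finset.Icc 2 (m+2), ((m+2).choose k : ℝ) * ((k : ℝ) - 1) *
        (x ^ k * (1 - x) ^ (m+2 - k)) := by
      rw [Finset.mul_sum]
      refine Finset.sum_congr rfl (fun k hk => ?_)
      have h2 : 2 ≤ k := (Finset.mem_Icc.mp hk).1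
      have hp : x^2 * x^(k-2) = x^k := by
        rw [← pow_add]; congr 1; omega
      linear_combination (((m+2).choose k : ℝ) * ((k:ℝ)-1) * (1-x)^(m+2-k)) * hp
    rw [step1]
    have hset : range (m+2+1) = insert 0 (insert 1 (Finset.Icc 2 (m+2))) := by
      ext k; simp only [Finset.mem_range, Finset.mem_insert, Finset.mem_Icc]; omega
    have hsum : ∑ k ∈ range (m+2+1), ((m+2).choose k : ℝ) * ((k : ℝ) - 1) *
        (x ^ k * (1-x) ^ (m+2-k)) = (m+2) * x - 1 := by
      have expand : ∀ k, ((m+2).choose k : ℝ) * ((k : ℝ) - 1) * (x ^ k * (1-x) ^ (m+2-k))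
          = (k:ℝ) * ((m+2).choose k : ℝ) * (x ^ k * (1-x) ^ (m+2-k))
            - ((m+2).choose k : ℝ) * (x ^ k * (1-x) ^ (m+2-k)) := fun k => by ring
      simp only [expand]
      rw [Finset.sum_sub_distrib, sum_k_choose, sum_choose_one]
      push_cast; ring
    rw [hset] at hsum
    rw [Finset.sum_insert (by simp), Finset.sum_insert (by simp)] at hsum
    simp only [Nat.choose_zero_right, Nat.choose_one_right, Nat.cast_zero, Nat.cast_one,
      Nat.sub_zero, pow_zero, pow_one] at hsum
    push_cast at hsum ⊢
    linear_combination hsum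

lemma gamB_zero (μ : Measure ℝ) : gamB μ 0 = 0 := by simp [gamB]

lemma integrableG (μ : Measure ℝ) [IsFiniteMeasure μ] (b : ℕ) :
    IntegrableOn (Gfun b) (Set.Icc (0:ℝ) 1) μ :=
  (contG b).integrableOn_Icc

lemma gamB_mono_step (μ : Measure ℝ) [IsFiniteMeasure μ] (h0 : μ {(0:ℝ)} = 0) (n : ℕ) :
    gamB μ n ≤ gamB μ (n+1) := by
  rw [gamB_eq_integral, gamB_eq_integral,
    integral_Icc_eq_integral_Ioc' h0, integral_Icc_eq_integral_Ioc' h0]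
  refine setIntegral_mono_on
    ((integrableG μ n).mono_set Set.Ioc_subset_Icc_self)
    ((integrableG μ (n+1)).mono_set Set.Ioc_subset_Icc_self)
    measurableSet_Ioc (fun x hx => ?_)
  obtain ⟨hx0, hx1⟩ := hx
  have hxx : (0:ℝ) < x^2 := by positivity
  have key : x^2 * Gfun (n+1) x - x^2 * Gfun n x = x * (1 - (1-x)^n) := by
    have e1 := idG n x
    have e2 := idG (n+1) x
    push_cast at e1 e2
    linear_combination e2 - e1
  have hpow : (1-x)^n ≤ 1 := pow_le_one₀ (by linarith) (by linarith)
  have h4 : x^2 * Gfun n x ≤ x^2 * Gfun (n+1) x := by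
    nlinarith [mul_nonneg hx0.le (show (0:ℝ) ≤ 1 - (1-x)^n by linarith)]
  exact (mul_le_mul_iff_right₀ hxx).mp h4

lemma gamB_convex_step (μ : Measure ℝ) [IsFiniteMeasure μ] (h0 : μ {(0:ℝ)} = 0) (n : ℕ) :
    gamB μ (n+1) - gamB μ n ≤ gamB μ (n+2) - gamB μ (n+1) := by
  have key : ∫ x in Set.Ioc (0:ℝ) 1, (Gfun (n+1) x - Gfun n x) ∂μ
      ≤ ∫ x in Set.Ioc (0:ℝ) 1, (Gfun (n+2) x - Gfun (n+1) x) ∂μ := by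
    refine setIntegral_mono_on
      (((integrableG μ (n+1)).mono_set Set.Ioc_subset_Icc_self).sub
        ((integrableG μ n).mono_set Set.Ioc_subset_Icc_self))
      (((integrableG μ (n+2)).mono_set Set.Ioc_subset_Icc_self).sub
        ((integrableG μ (n+1)).mono_set Set.Ioc_subset_Icc_self))
      measurableSet_Ioc (fun x hx => ?_)
    obtain ⟨hx0, hx1⟩ := hx
    have hxx : (0:ℝ) < x^2 := by positivity
    have key2 : x^2 * (Gfun (n+2) x - Gfun (n+1) x) - x^2 * (Gfun (n+1) x - Gfun n x)
        = x^2 * (1-x)^n := by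
      have e1 := idG n x
      have e2 := idG (n+1) x
      have e3 := idG (n+2) x
      push_cast at e1 e2 e3
      linear_combination e3 - 2*e2 + e1
    have hpow : (0:ℝ) ≤ (1-x)^n := pow_nonneg (by linarith) n
    have h4 : x^2 * (Gfun (n+1) x - Gfun n x) ≤ x^2 * (Gfun (n+2) x - Gfun (n+1) x) := by
      nlinarith [mul_nonneg (le_of_lt hxx) hpow]
    exact (mul_le_mul_iff_right₀ hxx).mp h4
  have ei : ∀ m, ∫ x in Set.Ioc (0:ℝ) 1, Gfun m x ∂μ = gamB μ m := by
    intro m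
    rw [gamB_eq_integral, integral_Icc_eq_integral_Ioc' h0]
  rw [integral_sub ((integrableG μ (n+1)).mono_set Set.Ioc_subset_Icc_self)
      ((integrableG μ n).mono_set Set.Ioc_subset_Icc_self),
    integral_sub ((integrableG μ (n+2)).mono_set Set.Ioc_subset_Icc_self)
      ((integrableG μ (n+1)).mono_set Set.Ioc_subset_Icc_self), ei, ei, ei] at key
  linarith


theorem gamB_spatial_estimate (μ : Measure ℝ) [IsFiniteMeasure μ]
    (h0 : μ {0} = 0) (h1 : μ {1} = 0)
    (hsupp : μ ((Set.Icc (0:ℝ) 1)ᶜ) = 0) (hpos : 0 < μ (Set.Icc (0:ℝ) 1))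
    (υ : ℕ) (hυ : 1 ≤ υ) (b : Fin υ → ℕ) (hsum : υ < ∑ i, b i) :
    (∑ i, gamB μ (b i)) ≤ gamB μ (∑ i, b i) ∧
      (υ : ℝ) * gamB μ ((∑ i, b i) / υ) ≤ ∑ i, gamB μ (b i) := by
  set d : ℕ → ℝ := fun j => gamB μ (j+1) - gamB μ j with hd
  have hd_nonneg : ∀ j, 0 ≤ d j := fun j => by
    simp only [hd]; linarith [gamB_mono_step μ h0 j]
  have hd_mono : Monotone d := monotone_nat_of_le_succ (fun j => gamB_convex_step μ h0 j)
  have telescope : ∀ n, ∑ j ∈ range n, d j = gamB μ n := by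
    intro n
    simp only [hd]
    rw [Finset.sum_range_sub (fun j => gamB μ j), gamB_zero, sub_zero]
  have superadd : ∀ a c : ℕ, gamB μ a + gamB μ c ≤ gamB μ (a + c) := by
    intro a c
    have h1' : gamB μ (a+c) - gamB μ c = ∑ j ∈ Finset.Ico c (a+c), d j := by
      rw [Finset.sum_Ico_eq_sub _ (Nat.le_add_left c a), telescope, telescope]
    have h2' : ∑ j ∈ Finset.Ico c (a+c), d j = ∑ j ∈ range a, d (c + j) := by
      rw [Finset.sum_Ico_eq_sum_range, Nat.add_sub_cancel]
    have h3' : ∑ j ∈ range a, d j ≤ ∑ j ∈ range a, d (c + j) :=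
      Finset.sum_le_sum (fun j _ => hd_mono (Nat.le_add_left j c))
    rw [telescope] at h3'
    rw [h2'] at h1'
    linarith
  have part1 : ∀ (s : Finset (Fin υ)), ∑ i ∈ s, gamB μ (b i) ≤ gamB μ (∑ i ∈ s, b i) := by
    intro s
    induction s using Finset.cons_induction with
    | empty => simp [gamB_zero]
    | cons a s ha ih =>
      rw [Finset.sum_cons, Finset.sum_cons]
      calc gamB μ (b a) + ∑ i ∈ s, gamB μ (b i)
          ≤ gamB μ (b a) + gamB μ (∑ i ∈ s, b i) := by linarith
        _ ≤ gamB μ (b a + ∑ i ∈ s, b i) := superadd _ _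
  set m : ℕ := (∑ i, b i) / υ with hm
  have keybound : ∀ n : ℕ, gamB μ m + ((n:ℝ) - (m:ℝ)) * d m ≤ gamB μ n := by
    intro n
    rcases le_or_gt m n with hle | hlt
    · have h1' : gamB μ n - gamB μ m = ∑ j ∈ Finset.Ico m n, d j := by
        rw [Finset.sum_Ico_eq_sub _ hle, telescope, telescope]
      have h2' : (Finset.Ico m n).card • d m ≤ ∑ j ∈ Finset.Ico m n, d j :=
        Finset.card_nsmul_le_sum _ _ _ (fun j hj => hd_mono (Finset.mem_Ico.mp hj).1)
      rw [Nat.card_Ico, nsmul_eq_mul, Nat.cast_sub hle] at h2'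
      linarith
    · have hle' : n ≤ m := le_of_lt hlt
      have h1' : gamB μ m - gamB μ n = ∑ j ∈ Finset.Ico n m, d j := by
        rw [Finset.sum_Ico_eq_sub _ hle', telescope, telescope]
      have h2' : ∑ j ∈ Finset.Ico n m, d j ≤ (Finset.Ico n m).card • d m :=
        Finset.sum_le_card_nsmul _ _ _ (fun j hj => hd_mono (le_of_lt (Finset.mem_Ico.mp hj).2))
      rw [Nat.card_Ico, nsmul_eq_mul, Nat.cast_sub hle'] at h2'
      linarith
  have part2 : (υ : ℝ) * gamB μ m ≤ ∑ i, gamB μ (b i) := by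
    have h' : υ * m ≤ ∑ i, b i := by
      rw [hm, mul_comm]; exact Nat.div_mul_le_self _ _
    have hsum_ge : (υ : ℝ) * (m : ℝ) ≤ ((∑ i, b i : ℕ) : ℝ) := by exact_mod_cast h'
    have hsumall : ∑ i, (gamB μ m + ((b i : ℝ) - (m:ℝ)) * d m) ≤ ∑ i, gamB μ (b i) :=
      Finset.sum_le_sum (fun i _ => keybound (b i))
    have expand : ∑ i, (gamB μ m + ((b i : ℝ) - (m:ℝ)) * d m)
        = (υ:ℝ) * gamB μ m + (((∑ i, b i : ℕ):ℝ) - (υ:ℝ) * (m:ℝ)) * d m := by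
      rw [Finset.sum_add_distrib, ← Finset.sum_mul, Finset.sum_sub_distrib]
      simp only [Finset.sum_const, Finset.card_univ, Fintype.card_fin, nsmul_eq_mul]
      push_cast
      ring
    have hnn : 0 ≤ (((∑ i, b i : ℕ):ℝ) - (υ:ℝ) * (m:ℝ)) * d m :=
      mul_nonneg (by linarith) (hd_nonneg m)
    linarith [expand ▸ hsumall]
  exact ⟨part1 Finset.univ, part2⟩
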